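/- arXiv:2602.14463 — 2 statements merged into one kernel-verified Lean document; each statement's English description precedes it below -/
import Mathlib

section
/- Let T_1 and T_2 be bounded linear operators on a complex Hilbert space H. Then ‖T_1 + T_2‖² ≤ ω(T_1*(T_1 + T_2)) + ω(T_2*(T_1 + T_2)). -/
open ContinuousLinearMap

/-- The numerical radius of a bounded linear operator on a complex Hilbert space:
`ω(T) = sup_{‖x‖ = 1} |⟨Tx, x⟩|`. -/
noncomputable def numRadius {H : Type*} [NormedAddCommGroup H] [InnerProductSpace ℂ H]
    (T : H →L[ℂ] H) : ℝ :=
  ⨆ x : {x : H // ‖x‖ = 1}, ‖(inner ℂ (T x) (x : H) : ℂ)‖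

lemma le_numRadius {H : Type*} [NormedAddCommGroup H] [InnerProductSpace ℂ H]
    (A : H →L[ℂ] H) {x : H} (hx : ‖x‖ = 1) :
    ‖(inner ℂ (A x) x : ℂ)‖ ≤ numRadius A := by
  have hb : BddAbove (Set.range fun y : {x : H // ‖x‖ = 1} =>
      ‖(inner ℂ (A y) (y : H) : ℂ)‖) := by
    refine ⟨‖A‖, ?_⟩
    rintro r ⟨y, rfl⟩
    calc ‖(inner ℂ (A y) (y : H) : ℂ)‖ ≤ ‖A (y : H)‖ * ‖(y : H)‖ := norm_inner_le_norm _ _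
      _ ≤ (‖A‖ * ‖(y : H)‖) * ‖(y : H)‖ := by
          gcongr; exact A.le_opNorm _
      _ = ‖A‖ := by rw [y.2]; ring
  exact le_ciSup hb ⟨x, hx⟩

lemma numRadius_nonneg {H : Type*} [NormedAddCommGroup H] [InnerProductSpace ℂ H]
    (A : H →L[ℂ] H) : 0 ≤ numRadius A :=
  Real.iSup_nonneg fun _ => norm_nonneg _

theorem norm_sq_add_le_numRadius_add_numRadius
    {H : Type*} [NormedAddCommGroup H] [InnerProductSpace ℂ H] [CompleteSpace H]
    (T₁ T₂ : H →L[ℂ] H) :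
    ‖T₁ + T₂‖ ^ 2 ≤
      numRadius (adjoint T₁ ∘L (T₁ + T₂)) + numRadius (adjoint T₂ ∘L (T₁ + T₂)) := by
  set S := T₁ + T₂ with hS
  set R := numRadius (adjoint T₁ ∘L S) + numRadius (adjoint T₂ ∘L S) with hR
  have hR0 : 0 ≤ R := add_nonneg (numRadius_nonneg _) (numRadius_nonneg _)
  have hkey : ∀ x : H, ‖x‖ = 1 → ‖S x‖ ^ 2 ≤ R := by
    intro x hx
    have h1 : (‖S x‖ ^ 2 : ℝ) = ‖(inner ℂ (S x) (S x) : ℂ)‖ := by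
      rw [inner_self_eq_norm_sq_to_K]
      simp
    have h2 : (inner ℂ (S x) (S x) : ℂ) = inner ℂ (S x) (T₁ x) + inner ℂ (S x) (T₂ x) := by
      rw [hS]
      simp only [ContinuousLinearMap.add_apply, inner_add_right]
    have h3 : (inner ℂ (S x) (T₁ x) : ℂ) = inner ℂ ((adjoint T₁ ∘L S) x) x := by
      simp [adjoint_inner_left]
    have h4 : (inner ℂ (S x) (T₂ x) : ℂ) = inner ℂ ((adjoint T₂ ∘L S) x) x := by
      simp [adjoint_inner_left]
    calc ‖S x‖ ^ 2 = ‖(inner ℂ (S x) (S x) : ℂ)‖ := h1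
      _ ≤ ‖(inner ℂ (S x) (T₁ x) : ℂ)‖ + ‖(inner ℂ (S x) (T₂ x) : ℂ)‖ := by
          rw [h2]; exact norm_add_le _ _
      _ ≤ R := by
          rw [h3, h4, hR]
          exact add_le_add (le_numRadius _ hx) (le_numRadius _ hx)
  have hnorm : ‖S‖ ≤ Real.sqrt R := by
    refine S.opNorm_le_bound (Real.sqrt_nonneg R) fun x => ?_
    rcases eq_or_ne x 0 with rfl | hx0
    · simp
    · have hxn : ‖x‖ ≠ 0 := norm_ne_zero_iff.mpr hx0
      set u := ((‖x‖ : ℂ))⁻¹ • x with hu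
      have hun : ‖u‖ = 1 := by
        rw [hu, norm_smul]
        simp [hxn, norm_inv]
      have h := hkey u hun
      have hSu : ‖S u‖ ≤ Real.sqrt R := by
        rw [← Real.sqrt_sq (norm_nonneg (S u))]
        exact Real.sqrt_le_sqrt h
      have hSx : ‖S x‖ = ‖x‖ * ‖S u‖ := by
        rw [hu, map_smul, norm_smul]
        simp [norm_inv]
        field_simp
      rw [hSx, mul_comm]

      gcongr
  calc ‖S‖ ^ 2 ≤ Real.sqrt R ^ 2 := by gcongr
    _ = R := Real.sq_sqrt hR0
end

section
/- Let T_1 and T_2 be bounded linear operators on a complex Hilbert space H. Then ω²([[O, T_1],[T_2*, O]]) ≤ (1/2)( ω([[O, T_1* T_1],[T_2* T_1, O]]) + ω([[O, T_2* T_2],[T_1* T_2, O]]) ), where ω² denotes the square of the numerical radius. -/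
open ContinuousLinearMap

/-- The operator matrix `[[O, A], [B, O]]` acting on the Hilbert space direct sum
`H ⊕ H`, sending `(x, y)` to `(A y, B x)`. -/
noncomputable def offDiagOp {H : Type*} [NormedAddCommGroup H] [InnerProductSpace ℂ H]
    (A B : H →L[ℂ] H) : WithLp 2 (H × H) →L[ℂ] WithLp 2 (H × H) :=
  (((WithLp.prodContinuousLinearEquiv 2 ℂ H H).symm :
        (H × H) →L[ℂ] WithLp 2 (H × H)).comp
      ((A.comp (ContinuousLinearMap.snd ℂ H H)).prod
        (B.comp (ContinuousLinearMap.fst ℂ H H)))).comp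
    ((WithLp.prodContinuousLinearEquiv 2 ℂ H H : WithLp 2 (H × H) ≃L[ℂ] H × H) :
      WithLp 2 (H × H) →L[ℂ] H × H)

section Aux

variable {H : Type*} [NormedAddCommGroup H] [InnerProductSpace ℂ H]

lemma inner_offDiag (A B : H →L[ℂ] H) (z w : WithLp 2 (H × H)) :
    (inner ℂ (offDiagOp A B z) w : ℂ) = inner ℂ (A z.snd) w.fst + inner ℂ (B z.fst) w.snd := rfl

lemma numRadius_nonneg_s8 (T : H →L[ℂ] H) : 0 ≤ numRadius T :=
  Real.iSup_nonneg fun _ => norm_nonneg _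

lemma numRadius_bddAbove (T : H →L[ℂ] H) :
    BddAbove (Set.range fun x : {x : H // ‖x‖ = 1} => ‖(inner ℂ (T x) (x : H) : ℂ)‖) := by
  refine ⟨‖T‖, ?_⟩
  rintro r ⟨⟨x, hx⟩, rfl⟩
  calc ‖(inner ℂ (T x) (x : H) : ℂ)‖ ≤ ‖T x‖ * ‖x‖ := norm_inner_le_norm _ _
    _ ≤ (‖T‖ * ‖x‖) * ‖x‖ := by gcongr; exact T.le_opNorm x
    _ = ‖T‖ := by rw [hx]; ring

lemma le_numRadius_s8 (T : H →L[ℂ] H) {z : H} (hz : ‖z‖ = 1) :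
    ‖(inner ℂ (T z) z : ℂ)‖ ≤ numRadius T :=
  le_ciSup (numRadius_bddAbove T) (⟨z, hz⟩ : {x : H // ‖x‖ = 1})

/-- Phase alignment: `|p| + |q| = |p + ω q|` for a suitable unimodular `ω`. -/
lemma exists_phase (p q : ℂ) :
    ∃ ω : ℂ, ‖ω‖ = 1 ∧ ‖p + ω * q‖ = ‖p‖ + ‖q‖ := by
  set θp := p.arg with hθp
  set θq := q.arg with hθq
  refine ⟨Complex.exp (((θp - θq : ℝ) : ℂ) * Complex.I),
    Complex.norm_exp_ofReal_mul_I _, ?_⟩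
  have hp := Complex.norm_mul_exp_arg_mul_I p
  have hq := Complex.norm_mul_exp_arg_mul_I q
  rw [← hθp] at hp
  rw [← hθq] at hq
  have key : p + Complex.exp (((θp - θq : ℝ) : ℂ) * Complex.I) * q
      = Complex.exp ((θp : ℂ) * Complex.I) * ((‖p‖ : ℂ) + ‖q‖) := by
    conv_lhs => rw [← hp, ← hq]
    rw [show (((θp - θq : ℝ)) : ℂ) * Complex.I
        = (θp : ℂ) * Complex.I - (θq : ℂ) * Complex.I by push_cast; ring,
      Complex.exp_sub]
    field_simp [Complex.exp_ne_zero]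
  rw [key, norm_mul, Complex.norm_exp_ofReal_mul_I, one_mul]
  rw [show ((‖p‖ : ℂ) + ‖q‖) = ((‖p‖ + ‖q‖ : ℝ) : ℂ) by
    push_cast; ring]
  rw [Complex.norm_real, Real.norm_of_nonneg (by positivity)]

/-- Half-phase alignment: `|μ a + conj μ c| = a + |c|` for `μ = exp(i arg c / 2)`, `a ≥ 0`. -/
lemma half_phase (a : ℝ) (ha : 0 ≤ a) (c : ℂ) :
    ‖Complex.exp (((c.arg / 2 : ℝ)) * Complex.I) * a
      + (starRingEnd ℂ) (Complex.exp (((c.arg / 2 : ℝ)) * Complex.I)) * c‖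
      = a + ‖c‖ := by
  set θ := c.arg with hθ
  set μ : ℂ := Complex.exp (((θ / 2 : ℝ)) * Complex.I) with hμ
  have hconj : (starRingEnd ℂ) μ = Complex.exp (-(((θ / 2 : ℝ)) * Complex.I)) := by
    rw [hμ, ← Complex.exp_conj, map_mul, Complex.conj_I, Complex.conj_ofReal]
    ring_nf
  have hc := Complex.norm_mul_exp_arg_mul_I c
  rw [← hθ] at hc
  have key : (starRingEnd ℂ) μ * c = (‖c‖ : ℂ) * μ := by
    rw [hconj]
    conv_lhs => rw [← hc]
    rw [hμ, mul_comm (Complex.exp _), mul_assoc, ← Complex.exp_add]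
    congr 2
    push_cast
    ring
  rw [key, show μ * a + (‖c‖ : ℂ) * μ = μ * ((a : ℂ) + ‖c‖) by ring,
    norm_mul, hμ, Complex.norm_exp_ofReal_mul_I, one_mul,
    show ((a : ℂ) + ‖c‖) = ((a + ‖c‖ : ℝ) : ℂ) by push_cast; ring,
    Complex.norm_real, Real.norm_of_nonneg (by positivity)]

end Aux

section Lower

variable {H : Type*} [NormedAddCommGroup H] [InnerProductSpace ℂ H] [CompleteSpace H]

/-- Lower bound on the numerical radius of `[[0, A*A],[B*A, 0]]` by testing at
`((μ/(√2‖y‖)) y, (1/(√2‖y‖)) y)`. -/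
lemma numRadius_offDiag_lower (A B : H →L[ℂ] H) {y : H} (hy : y ≠ 0) :
    (‖A y‖ ^ 2 + ‖(inner ℂ (A y) (B y) : ℂ)‖) / (2 * ‖y‖ ^ 2)
      ≤ numRadius (offDiagOp (adjoint A ∘L A) (adjoint B ∘L A)) := by
  have hy0 : (0:ℝ) < ‖y‖ := norm_pos_iff.mpr hy
  set c : ℂ := inner ℂ (A y) (B y) with hc
  set μ : ℂ := Complex.exp (((c.arg / 2 : ℝ)) * Complex.I) with hμ
  have hμabs : ‖μ‖ = 1 := Complex.norm_exp_ofReal_mul_I _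
  set s : ℝ := (Real.sqrt 2 * ‖y‖)⁻¹ with hs
  have hs0 : 0 < s := by positivity
  set w : WithLp 2 (H × H) := (WithLp.equiv 2 (H × H)).symm ((μ * (s:ℂ)) • y, ((s:ℝ):ℂ) • y)
    with hw
  have hwfst : w.fst = (μ * (s:ℂ)) • y := rfl
  have hwsnd : w.snd = ((s:ℝ):ℂ) • y := rfl
  have hs2 : s ^ 2 = (2 * ‖y‖ ^ 2)⁻¹ := by
    rw [hs, inv_pow, mul_pow, Real.sq_sqrt (by norm_num : (0:ℝ) ≤ 2)]
  have hwnorm : ‖w‖ = 1 := by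
    have h1 : ‖w‖ ^ 2 = ‖w.fst‖ ^ 2 + ‖w.snd‖ ^ 2 := WithLp.prod_norm_sq_eq_of_L2 w
    rw [hwfst, hwsnd] at h1
    have h2 : ‖(μ * (s:ℂ)) • y‖ ^ 2 = s ^ 2 * ‖y‖ ^ 2 := by
      rw [norm_smul, norm_mul, hμabs, one_mul, Complex.norm_real,
        Real.norm_of_nonneg hs0.le]
      ring
    have h3 : ‖((s:ℝ):ℂ) • y‖ ^ 2 = s ^ 2 * ‖y‖ ^ 2 := by
      rw [norm_smul, Complex.norm_real, Real.norm_of_nonneg hs0.le]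
      ring
    rw [h2, h3, hs2] at h1
    have h4 : ‖w‖ ^ 2 = 1 := by rw [h1]; field_simp; ring
    nlinarith [norm_nonneg w]
  have hinner : (inner ℂ (offDiagOp (adjoint A ∘L A) (adjoint B ∘L A) w) w : ℂ)
      = ((s:ℂ)) ^ 2 * (μ * ((‖A y‖ ^ 2 : ℝ) : ℂ) + (starRingEnd ℂ) μ * c) := by
    have hAy : (inner ℂ (A y) (A y) : ℂ) = ((‖A y‖ ^ 2 : ℝ) : ℂ) := by
      rw [@inner_self_eq_norm_sq_to_K ℂ]; norm_cast
    rw [inner_offDiag, hwfst, hwsnd]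
    simp only [coe_comp', Function.comp_apply, map_smul]
    rw [inner_smul_left, inner_smul_left, inner_smul_right, inner_smul_right,
      adjoint_inner_left, adjoint_inner_left]
    rw [← hc, hAy]
    simp only [map_mul, Complex.conj_ofReal]
    ring
  have hval : ‖(inner ℂ (offDiagOp (adjoint A ∘L A) (adjoint B ∘L A) w) w : ℂ)‖
      = (‖A y‖ ^ 2 + ‖(inner ℂ (A y) (B y) : ℂ)‖) / (2 * ‖y‖ ^ 2) := by
    rw [hinner, norm_mul]
    rw [half_phase (‖A y‖ ^ 2) (by positivity) c]
    have habs : ‖(((s:ℝ):ℂ) ^ 2)‖ = s ^ 2 := by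
      rw [show (((s:ℝ)):ℂ)^2 = ((s^2 : ℝ) : ℂ) by push_cast; ring,
        Complex.norm_real, Real.norm_of_nonneg (by positivity)]
    rw [habs, hs2, ← hc]
    field_simp
  rw [← hval]
  exact le_numRadius_s8 _ hwnorm

end Lower

set_option maxHeartbeats 2000000 in
theorem numRadius_sq_offDiag_le
    {H : Type*} [NormedAddCommGroup H] [InnerProductSpace ℂ H] [CompleteSpace H]
    (T₁ T₂ : H →L[ℂ] H) :
    numRadius (offDiagOp T₁ (adjoint T₂)) ^ 2 ≤
      (1 / 2) * (numRadius (offDiagOp (adjoint T₁ ∘L T₁) (adjoint T₂ ∘L T₁)) +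
        numRadius (offDiagOp (adjoint T₂ ∘L T₂) (adjoint T₁ ∘L T₂))) := by
  set N₁ := numRadius (offDiagOp (adjoint T₁ ∘L T₁) (adjoint T₂ ∘L T₁)) with hN₁
  set N₂ := numRadius (offDiagOp (adjoint T₂ ∘L T₂) (adjoint T₁ ∘L T₂)) with hN₂
  have hN₁0 : 0 ≤ N₁ := numRadius_nonneg_s8 _
  have hN₂0 : 0 ≤ N₂ := numRadius_nonneg_s8 _
  set M : ℝ := (1 / 2) * (N₁ + N₂) with hM
  have hM0 : 0 ≤ M := by positivity
  have key : numRadius (offDiagOp T₁ (adjoint T₂)) ≤ Real.sqrt M := by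
    apply Real.iSup_le _ (Real.sqrt_nonneg _)
    rintro ⟨z, hz⟩
    rw [Real.le_sqrt (norm_nonneg _) hM0]
    set x : H := z.fst with hx
    set y : H := z.snd with hy
    have hz2 : ‖x‖ ^ 2 + ‖y‖ ^ 2 = 1 := by
      have h := WithLp.prod_norm_sq_eq_of_L2 z
      rw [hz] at h
      rw [← hx, ← hy] at h
      simpa using h.symm
    have hf : (inner ℂ (offDiagOp T₁ (adjoint T₂) z) z : ℂ)
        = inner ℂ (T₁ y) x + (starRingEnd ℂ) (inner ℂ (T₂ y) x) := by
      rw [inner_offDiag, adjoint_inner_left, inner_conj_symm]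
    clear_value x y
    by_cases hy0 : y = 0
    · rw [hf, hy0]
      simp [hM0]
    · have hyn : (0:ℝ) < ‖y‖ := norm_pos_iff.mpr hy0
      set p : ℂ := inner ℂ (T₁ y) x with hp
      set q : ℂ := inner ℂ (T₂ y) x with hq
      set c : ℂ := inner ℂ (T₁ y) (T₂ y) with hc
      obtain ⟨ω, hω1, hωe⟩ := exists_phase p q
      set g : H := T₁ y + (starRingEnd ℂ) ω • T₂ y with hg
      have h2 : p + ω * q = inner ℂ g x := by
        rw [hg, inner_add_left, inner_smul_left, Complex.conj_conj, hp, hq]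
      -- bound ‖g‖^2
      have hgsq : ‖g‖ ^ 2 ≤ ‖T₁ y‖ ^ 2 + ‖T₂ y‖ ^ 2 + 2 * ‖c‖ := by
        have hns := @norm_add_sq ℂ _ _ _ _ (T₁ y) ((starRingEnd ℂ) ω • T₂ y)
        rw [← hg] at hns
        have hsm : (inner ℂ (T₁ y) ((starRingEnd ℂ) ω • T₂ y) : ℂ) = (starRingEnd ℂ) ω * c := by
          rw [inner_smul_right, hc]
        have hre : Complex.re ((starRingEnd ℂ) ω * c) ≤ ‖c‖ := by
          calc Complex.re ((starRingEnd ℂ) ω * c) ≤ ‖(starRingEnd ℂ) ω * c‖ :=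
              Complex.re_le_norm _
            _ = ‖c‖ := by
              rw [norm_mul, Complex.norm_conj, hω1, one_mul]
        have hnsm : ‖(starRingEnd ℂ) ω • T₂ y‖ = ‖T₂ y‖ := by
          rw [norm_smul, Complex.norm_conj, hω1, one_mul]
        rw [hns, hsm, hnsm]
        simp only [RCLike.re_to_complex]
        linarith [hre]
      -- lower bounds
      have h6 := numRadius_offDiag_lower T₁ T₂ hy0
      have h7 := numRadius_offDiag_lower T₂ T₁ hy0
      rw [← hN₁] at h6
      rw [← hN₂] at h7
      have hcc : ‖(inner ℂ (T₂ y) (T₁ y) : ℂ)‖ = ‖c‖ := by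
        rw [hc]; exact (norm_inner_symm _ _).symm
      rw [hcc] at h7
      -- combine
      have hfle : ‖(inner ℂ (offDiagOp T₁ (adjoint T₂) z) z : ℂ)‖
          ≤ ‖p‖ + ‖q‖ := by
        rw [hf]
        calc ‖p + (starRingEnd ℂ) q‖ ≤ ‖p‖ + ‖(starRingEnd ℂ) q‖ :=
            norm_add_le _ _
          _ = ‖p‖ + ‖q‖ := by rw [Complex.norm_conj]
      have hpq : ‖p‖ + ‖q‖ ≤ ‖x‖ * ‖g‖ := by
        rw [← hωe, h2]
        calc ‖(inner ℂ g x : ℂ)‖ = ‖(inner ℂ g x : ℂ)‖ := rfl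
          _ ≤ ‖g‖ * ‖x‖ := norm_inner_le_norm _ _
          _ = ‖x‖ * ‖g‖ := mul_comm _ _
      have hxy : ‖x‖ ^ 2 * ‖y‖ ^ 2 ≤ 1 / 4 := by nlinarith [sq_nonneg (‖x‖^2 - ‖y‖^2)]
      have h6' : ‖T₁ y‖ ^ 2 + ‖c‖ ≤ N₁ * (2 * ‖y‖ ^ 2) := by
        rw [← hc] at h6
        exact (div_le_iff₀ (by positivity)).mp h6
      have h7' : ‖T₂ y‖ ^ 2 + ‖c‖ ≤ N₂ * (2 * ‖y‖ ^ 2) := by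
        exact (div_le_iff₀ (by positivity)).mp h7
      have hK0 : (0:ℝ) ≤ ‖T₁ y‖ ^ 2 + ‖T₂ y‖ ^ 2 + 2 * ‖c‖ := by positivity
      have hchain : ‖(inner ℂ (offDiagOp T₁ (adjoint T₂) z) z : ℂ)‖ ^ 2
          ≤ ‖x‖ ^ 2 * (‖T₁ y‖ ^ 2 + ‖T₂ y‖ ^ 2 + 2 * ‖c‖) := by
        calc ‖(inner ℂ (offDiagOp T₁ (adjoint T₂) z) z : ℂ)‖ ^ 2
            ≤ (‖x‖ * ‖g‖) ^ 2 := by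
              apply pow_le_pow_left₀ (norm_nonneg _)
              exact le_trans hfle hpq
          _ = ‖x‖ ^ 2 * ‖g‖ ^ 2 := by ring
          _ ≤ ‖x‖ ^ 2 * (‖T₁ y‖ ^ 2 + ‖T₂ y‖ ^ 2 + 2 * ‖c‖) := by
              apply mul_le_mul_of_nonneg_left hgsq (by positivity)
      refine le_trans hchain ?_
      have hy2 : (0:ℝ) < ‖y‖ ^ 2 := by positivity
      have hx2 : ‖x‖ ^ 2 ≤ 1 / (4 * ‖y‖ ^ 2) := by
        rw [le_div_iff₀ (by positivity)]
        nlinarith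
      have step1 : ‖x‖ ^ 2 * (‖T₁ y‖ ^ 2 + ‖T₂ y‖ ^ 2 + 2 * ‖c‖)
          ≤ (1 / (4 * ‖y‖ ^ 2)) * (‖T₁ y‖ ^ 2 + ‖T₂ y‖ ^ 2 + 2 * ‖c‖) :=
        mul_le_mul_of_nonneg_right hx2 hK0
      have hKle : ‖T₁ y‖ ^ 2 + ‖T₂ y‖ ^ 2 + 2 * ‖c‖ ≤ (N₁ + N₂) * (2 * ‖y‖ ^ 2) := by
        have := h6'
        have := h7'
        nlinarith
      have step2 : (1 / (4 * ‖y‖ ^ 2)) * (‖T₁ y‖ ^ 2 + ‖T₂ y‖ ^ 2 + 2 * ‖c‖) ≤ M := by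
        rw [hM]
        calc (1 / (4 * ‖y‖ ^ 2)) * (‖T₁ y‖ ^ 2 + ‖T₂ y‖ ^ 2 + 2 * ‖c‖)
            ≤ (1 / (4 * ‖y‖ ^ 2)) * ((N₁ + N₂) * (2 * ‖y‖ ^ 2)) := by
              apply mul_le_mul_of_nonneg_left hKle (by positivity)
          _ = 1 / 2 * (N₁ + N₂) := by field_simp; ring
      linarith
  calc numRadius (offDiagOp T₁ (adjoint T₂)) ^ 2
      ≤ Real.sqrt M ^ 2 := by
        have := numRadius_nonneg_s8 (offDiagOp T₁ (adjoint T₂))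
        gcongr
    _ = M := Real.sq_sqrt hM0
end
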